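/- Let λ, μ be real numbers with λ ≥ 1 and λ + μ > 1, and let n be a natural number. Then for every z in the open unit disc 𝕌 the function 𝕎_{λ,μ}(z) is nonzero for z ≠ 0 and Re((𝕎_{λ,μ})_n(z)/𝕎_{λ,μ}(z)) ≥ (2(λ+μ)−1)/(2(λ+μ)), where at z = 0 the ratio is understood as its analytic extension with value 1. -/

import Mathlib

/-- The second normalized Wright function
`𝕎_{λ,μ}(z) = z + ∑_{m=1}^∞ (Γ(λ+μ)/((m+1)! Γ(λm+λ+μ))) z^{m+1}`. -/
noncomputable def normWright2 (lam mu : ℝ) (z : ℂ) : ℂ :=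
  ∑' m : ℕ,
    ((Real.Gamma (lam + mu) / (Nat.factorial (m + 1) * Real.Gamma (lam * m + lam + mu)) : ℝ) : ℂ)
      * z ^ (m + 1)

/-- The `n`-th partial sum
`(𝕎_{λ,μ})_n(z) = z + ∑_{m=1}^n (Γ(λ+μ)/((m+1)! Γ(λm+λ+μ))) z^{m+1}`. -/
noncomputable def normWright2Partial (lam mu : ℝ) (n : ℕ) (z : ℂ) : ℂ :=
  ∑ m ∈ Finset.range (n + 1),
    ((Real.Gamma (lam + mu) / (Nat.factorial (m + 1) * Real.Gamma (lam * m + lam + mu)) : ℝ) : ℂ)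
      * z ^ (m + 1)

lemma re_nonneg_of_norm_sub_le (w : ℂ) (h : ‖w - 1‖ ≤ ‖w + 1‖) : 0 ≤ w.re := by
  have h2 : ‖w - 1‖ ^ 2 ≤ ‖w + 1‖ ^ 2 := pow_le_pow_left₀ (norm_nonneg _) h 2
  simp only [Complex.sq_norm, Complex.normSq_apply, Complex.sub_re,
    Complex.sub_im, Complex.add_re, Complex.add_im, Complex.one_re, Complex.one_im] at h2
  nlinarith [h2]

lemma two_pow_le_factorial_succ (m : ℕ) : (2:ℝ)^m ≤ (Nat.factorial (m+1) : ℝ) := by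
  have := @Nat.factorial_mul_pow_le_factorial 1 m
  simp [Nat.factorial] at this
  calc (2:ℝ)^m = ((2^m : ℕ) : ℝ) := by push_cast; ring
    _ ≤ _ := by rw [Nat.add_comm m 1]; exact_mod_cast this

lemma pow_mul_Gamma_le (s : ℝ) (hs : 0 < s) : ∀ k : ℕ, s^k * Real.Gamma s ≤ Real.Gamma (k + s)
  | 0 => by simp
  | (k+1) => by
      have hk : (0:ℝ) < k + s := by positivity
      have h1 : Real.Gamma ((k:ℝ) + 1 + s) = ((k:ℝ) + s) * Real.Gamma ((k:ℝ) + s) := by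
        rw [show (k:ℝ) + 1 + s = ((k:ℝ) + s) + 1 by ring, Real.Gamma_add_one hk.ne']
      have h2 := pow_mul_Gamma_le s hs k
      have hΓ : 0 < Real.Gamma ((k:ℝ) + s) := Real.Gamma_pos_of_pos hk
      have hss : s ≤ (k:ℝ) + s := by nlinarith [Nat.cast_nonneg (α := ℝ) k]
      calc s^(k+1) * Real.Gamma s = s * (s^k * Real.Gamma s) := by ring
        _ ≤ s * Real.Gamma ((k:ℝ) + s) := mul_le_mul_of_nonneg_left h2 hs.le
        _ ≤ ((k:ℝ) + s) * Real.Gamma ((k:ℝ) + s) := mul_le_mul_of_nonneg_right hss hΓ.le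
        _ = Real.Gamma (((k:ℕ):ℝ) + 1 + s) := by rw [h1]
        _ = Real.Gamma (((k+1:ℕ):ℝ) + s) := by push_cast; ring_nf

lemma wright_coeff_pos (lam mu : ℝ) (hlam : 1 ≤ lam) (hmu : 1 < lam + mu) (m : ℕ) :
    0 < Real.Gamma (lam + mu) / ((Nat.factorial (m+1) : ℝ) * Real.Gamma (lam * m + lam + mu)) := by
  have harg : 0 < lam * m + lam + mu := by nlinarith [Nat.cast_nonneg (α := ℝ) m]
  have h1 : 0 < Real.Gamma (lam + mu) := Real.Gamma_pos_of_pos (by linarith)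
  have h2 : 0 < Real.Gamma (lam * m + lam + mu) := Real.Gamma_pos_of_pos harg
  have h3 : (0:ℝ) < (Nat.factorial (m+1) : ℝ) := by positivity
  positivity

lemma wright_coeff_le (lam mu : ℝ) (hlam : 1 ≤ lam) (hmu : 1 < lam + mu) (m : ℕ) :
    Real.Gamma (lam + mu) / ((Nat.factorial (m+1) : ℝ) * Real.Gamma (lam * m + lam + mu)) ≤
      (1/(2*(lam + mu)))^m := by
  set s := lam + mu with hs
  have hs0 : 0 < s := by dsimp [s]; linarith
  have hΓs : 0 < Real.Gamma s := Real.Gamma_pos_of_pos hs0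
  have harg : 0 < lam * m + lam + mu := by nlinarith [Nat.cast_nonneg (α := ℝ) m]
  have hΓarg : 0 < Real.Gamma (lam * m + lam + mu) := Real.Gamma_pos_of_pos harg
  have hge : Real.Gamma ((m:ℝ) + s) ≤ Real.Gamma (lam * m + lam + mu) := by
    rcases Nat.eq_zero_or_pos m with h | h
    · subst h
      simp only [Nat.cast_zero, mul_zero, zero_add]
      exact le_of_eq rfl
    · have hm1 : (1:ℝ) ≤ (m:ℝ) := by exact_mod_cast h
      have hmem1 : (m:ℝ) + s ∈ Set.Ici (2:ℝ) := by
        simp only [Set.mem_Ici]; dsimp [s]; linarith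
      have hmem2 : lam * m + lam + mu ∈ Set.Ici (2:ℝ) := by
        simp only [Set.mem_Ici]; nlinarith
      have hle : (m:ℝ) + s ≤ lam * m + lam + mu := by dsimp [s]; nlinarith
      exact Real.Gamma_strictMonoOn_Ici.monotoneOn hmem1 hmem2 hle
  have hlow : (2:ℝ)^m * (s^m * Real.Gamma s) ≤
      (Nat.factorial (m+1) : ℝ) * Real.Gamma (lam * m + lam + mu) := by
    have := (pow_mul_Gamma_le s hs0 m).trans hge
    exact mul_le_mul (two_pow_le_factorial_succ m) this (by positivity) (by positivity)
  have hpos : (0:ℝ) < (2:ℝ)^m * (s^m * Real.Gamma s) := by positivity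
  calc Real.Gamma s / ((Nat.factorial (m+1) : ℝ) * Real.Gamma (lam * m + lam + mu))
      ≤ Real.Gamma s / ((2:ℝ)^m * (s^m * Real.Gamma s)) :=
        div_le_div_of_nonneg_left hΓs.le hpos hlow
    _ = (1/(2*s))^m := by
        rw [div_pow, one_pow, mul_pow]
        field_simp


set_option maxHeartbeats 2000000 in
/-- If `λ ≥ 1` and `λ + μ > 1`, then on the open unit disc `𝕎_{λ,μ}` is nonzero away
from `0`, and `Re((𝕎_{λ,μ})_n(z)/𝕎_{λ,μ}(z)) ≥ (2(λ+μ)-1)/(2(λ+μ))`, the ratio being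
understood as its analytic extension, with value `1`, at `z = 0`. -/
theorem re_partial_div_normWright2 (lam mu : ℝ) (hlam : 1 ≤ lam) (hmu : 1 < lam + mu) (n : ℕ) :
    ∀ z : ℂ, ‖z‖ < 1 →
      (z ≠ 0 → normWright2 lam mu z ≠ 0) ∧
      (2 * (lam + mu) - 1) / (2 * (lam + mu)) ≤
        (if z = 0 then (1 : ℂ)
          else normWright2Partial lam mu n z / normWright2 lam mu z).re := by
  intro z hz
  set s := lam + mu with hsdef
  have hs1 : 1 < s := hmu
  have hs0 : 0 < s := by linarith
  have hs2 : (0:ℝ) < 2*s - 1 := by linarith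
  by_cases hz0 : z = 0
  · subst hz0
    refine ⟨fun h => absurd rfl h, ?_⟩
    rw [if_pos rfl]
    simp only [Complex.one_re]
    rw [div_le_one (by linarith)]
    linarith
  · set c : ℕ → ℝ := fun m =>
      Real.Gamma (lam + mu) / ((Nat.factorial (m+1) : ℝ) * Real.Gamma (lam * m + lam + mu))
      with hcdef
    have hcpos : ∀ m, 0 < c m := fun m => wright_coeff_pos lam mu hlam hmu m
    have hcle : ∀ m, c m ≤ (1/(2*s))^m := fun m => wright_coeff_le lam mu hlam hmu m
    set r := ‖z‖ with hrdef
    have hr0 : 0 < r := norm_pos_iff.mpr hz0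
    set q : ℝ := 1/(2*s) with hqdef
    have hq0 : 0 < q := by rw [hqdef]; positivity
    set x := q * r with hxdef
    have hx0 : 0 < x := mul_pos hq0 hr0
    have h2sx : 2*s*x = r := by
      rw [hxdef, hqdef]; field_simp
    have hxlt1 : x < 1 := by nlinarith
    have hxhalf : x < 1/2 := by nlinarith
    have h1x : 0 < 1 - x := by linarith
    have hxne1 : x ≠ 1 := by linarith
    set f : ℕ → ℂ := fun m => ((c m : ℝ) : ℂ) * z ^ (m+1) with hfdef
    have hnf : ∀ m, ‖f m‖ = c m * r^(m+1) := by
      intro m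
      rw [hfdef]
      simp only [norm_mul, Complex.norm_real, Real.norm_eq_abs, norm_pow,
        abs_of_pos (hcpos m)]
      rfl
    have hfle : ∀ m, ‖f m‖ ≤ r * x^m := by
      intro m
      rw [hnf m]
      calc c m * r^(m+1) ≤ q^m * r^(m+1) :=
            mul_le_mul_of_nonneg_right (hcle m) (by positivity)
        _ = r * x^m := by rw [hxdef, mul_pow, pow_succ]; ring
    have hsumnorm : Summable (fun m => ‖f m‖) :=
      Summable.of_nonneg_of_le (fun m => norm_nonneg _) hfle
        ((summable_geometric_of_lt_one hx0.le hxlt1).mul_left r)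
    have hsum : Summable f := hsumnorm.of_norm
    set W := normWright2 lam mu z with hWd
    set P := normWright2Partial lam mu n z with hPd
    have hWdef : W = ∑' m, f m := rfl
    have hPdef : P = ∑ m ∈ Finset.range (n+1), f m := rfl
    set T := ∑' k, f (k + (n+1)) with hTdef
    have hsplit : W = P + T := by
      rw [hWdef, hPdef, hTdef]
      exact (Summable.sum_add_tsum_nat_add (n+1) hsum).symm
    have hgeo : ∑' k:ℕ, x^k = (1-x)⁻¹ := tsum_geometric_of_lt_one hx0.le hxlt1
    set B : ℝ := r * x^(n+1) / (1-x) with hBdef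
    have hTB : ‖T‖ ≤ B := by
      have h1 : ‖T‖ ≤ ∑' k, ‖f (k + (n+1))‖ :=
        norm_tsum_le_tsum_norm ((summable_nat_add_iff (n+1)).mpr hsumnorm)
      have h2 : ∑' k, ‖f (k + (n+1))‖ ≤ ∑' k:ℕ, (r * x^(n+1)) * x^k := by
        refine Summable.tsum_le_tsum ?_ ((summable_nat_add_iff (n+1)).mpr hsumnorm)
          ((summable_geometric_of_lt_one hx0.le hxlt1).mul_left _)
        intro k
        calc ‖f (k+(n+1))‖ ≤ r * x^(k+(n+1)) := hfle _
          _ = r * x^(n+1) * x^k := by rw [pow_add]; ring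
      rw [tsum_mul_left, hgeo] at h2
      rw [hBdef, div_eq_mul_inv]
      linarith [h1.trans h2]
    set A : ℝ := ∑ m ∈ Finset.range n, r * x^(m+1) with hAdef
    have hA : A = r*x*((1-x^n)/(1-x)) := by
      rw [hAdef]
      calc ∑ m ∈ Finset.range n, r * x^(m+1)
          = ∑ m ∈ Finset.range n, (r*x) * x^m := by
            refine Finset.sum_congr rfl fun m _ => ?_
            rw [pow_succ]; ring
        _ = (r*x) * ∑ m ∈ Finset.range n, x^m := by rw [Finset.mul_sum]
        _ = r*x*((1-x^n)/(1-x)) := by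
            rw [geom_sum_eq hxne1]
            congr 1
            rw [div_eq_div_iff (sub_ne_zero.mpr hxne1) h1x.ne']
            ring
    have hPsplit : P = ∑ m ∈ Finset.range n, f (m+1) + f 0 := by
      rw [hPdef, Finset.sum_range_succ']
    have hc0 : c 0 = 1 := by
      have hΓ : 0 < Real.Gamma (lam + mu) := Real.Gamma_pos_of_pos (by linarith)
      rw [hcdef]
      simp only [Nat.cast_zero, mul_zero, zero_add, Nat.zero_add, Nat.factorial_one,
        Nat.cast_one, one_mul]
      exact div_self hΓ.ne'
    have hf0 : ‖f 0‖ = r := by rw [hnf 0, hc0, pow_one, one_mul]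
    have hAle : ‖∑ m ∈ Finset.range n, f (m+1)‖ ≤ A := by
      refine (norm_sum_le _ _).trans ?_
      exact Finset.sum_le_sum fun m _ => hfle (m+1)
    have hPlow : r - A ≤ ‖P‖ := by
      have htri : ‖f 0‖ ≤ ‖∑ m ∈ Finset.range n, f (m+1) + f 0‖
          + ‖∑ m ∈ Finset.range n, f (m+1)‖ := by
        have hsub : (∑ m ∈ Finset.range n, f (m+1) + f 0)
            - ∑ m ∈ Finset.range n, f (m+1) = f 0 := by ring
        calc ‖f 0‖ = ‖(∑ m ∈ Finset.range n, f (m+1) + f 0)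
            - ∑ m ∈ Finset.range n, f (m+1)‖ := by rw [hsub]
          _ ≤ _ := norm_sub_le _ _
      rw [hPsplit]
      rw [hf0] at htri
      linarith [hAle]
    have hxx : x^(n+1) ≤ x := by
      calc x^(n+1) ≤ x^1 := pow_le_pow_of_le_one hx0.le hxlt1.le (by omega)
        _ = x := pow_one x
    have hKEY : A + (2*s-1)*B < r := by
      have heq : A + (2*s-1)*B = (r*x*(1-x^n) + (2*s-1)*(r*x^(n+1)))/(1-x) := by
        rw [hA, hBdef]
        field_simp
      rw [heq, div_lt_iff₀ h1x]
      have h1 : (2*s-2) * (r * x^(n+1)) ≤ (2*s-2) * (r * x) := by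
        apply mul_le_mul_of_nonneg_left _ (by linarith)
        exact mul_le_mul_of_nonneg_left hxx hr0.le
      have hrr : r * r < r * 1 := by
        exact mul_lt_mul_of_pos_left hz hr0
      calc r*x*(1-x^n) + (2*s-1)*(r*x^(n+1))
          = r*x + (2*s-2)*(r*x^(n+1)) := by ring
        _ ≤ r*x + (2*s-2)*(r*x) := by linarith
        _ = r * (2*s*x) - r*x := by ring
        _ = r * r - r*x := by rw [h2sx]
        _ < r * 1 - r*x := by linarith
        _ = r * (1-x) := by ring
    have hB0 : 0 ≤ B := by
      rw [hBdef]; positivity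
    have hkey2 : (2*s-1) * ‖T‖ ≤ ‖P‖ := by
      have h1 : (2*s-1) * ‖T‖ ≤ (2*s-1) * B := mul_le_mul_of_nonneg_left hTB hs2.le
      linarith
    have hWlow : 0 < ‖W‖ := by
      have htri : ‖P‖ ≤ ‖W‖ + ‖T‖ := by
        calc ‖P‖ = ‖W - T‖ := by rw [hsplit]; ring_nf
          _ ≤ ‖W‖ + ‖T‖ := norm_sub_le _ _
      have hT1 : ‖T‖ ≤ (2*s-1) * ‖T‖ := by
        nlinarith [norm_nonneg T]
      have : (2*s-1)*B < r - A := by linarith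
      have hTr : ‖T‖ ≤ (2*s-1)*B := le_trans hT1 (mul_le_mul_of_nonneg_left hTB hs2.le)
      linarith
    have hWne : W ≠ 0 := by
      intro h
      rw [h, norm_zero] at hWlow
      exact lt_irrefl 0 hWlow
    refine ⟨fun _ => hWne, ?_⟩
    rw [if_neg hz0]
    set u := P / W with hudef
    set g : ℂ := ((2*s : ℝ):ℂ) * u - ((2*s - 1 : ℝ):ℂ) with hgdef
    have hPW : ((2*s : ℝ):ℂ) * (P / W) * W = ((2*s : ℝ):ℂ) * P := by
      rw [mul_assoc, div_mul_cancel₀ _ hWne]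
    have e1 : (g - 1) * W = -(((2*s:ℝ):ℂ) * T) := by
      calc (g - 1) * W
          = ((2*s : ℝ):ℂ) * (P / W) * W - (((2*s - 1 : ℝ):ℂ) + 1) * W := by
            rw [hgdef, hudef]; ring
        _ = ((2*s : ℝ):ℂ) * P - (((2*s - 1 : ℝ):ℂ) + 1) * (P + T) := by
            rw [hPW, hsplit]
        _ = -(((2*s:ℝ):ℂ) * T) := by push_cast; ring
    have e2 : (g + 1) * W = 2*P - ((2*s-2:ℝ):ℂ) * T := by
      calc (g + 1) * W
          = ((2*s : ℝ):ℂ) * (P / W) * W - (((2*s - 1 : ℝ):ℂ) - 1) * W := by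
            rw [hgdef, hudef]; ring
        _ = ((2*s : ℝ):ℂ) * P - (((2*s - 1 : ℝ):ℂ) - 1) * (P + T) := by
            rw [hPW, hsplit]
        _ = 2*P - ((2*s-2:ℝ):ℂ) * T := by push_cast; ring
    have hn1 : ‖(g-1)*W‖ = (2*s) * ‖T‖ := by
      rw [e1, norm_neg, norm_mul, Complex.norm_real, Real.norm_eq_abs,
        abs_of_pos (by linarith : (0:ℝ) < 2*s)]
    have hn2 : 2*‖P‖ - (2*s-2)*‖T‖ ≤ ‖(g+1)*W‖ := by
      rw [e2]
      have h1 := norm_sub_norm_le ((2:ℂ)*P) (((2*s-2:ℝ):ℂ)*T)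
      have hnp : ‖(2:ℂ)*P‖ = 2*‖P‖ := by
        rw [norm_mul]; norm_num
      have hnt : ‖((2*s-2:ℝ):ℂ)*T‖ = (2*s-2)*‖T‖ := by
        rw [norm_mul, Complex.norm_real, Real.norm_eq_abs,
          abs_of_nonneg (by linarith : (0:ℝ) ≤ 2*s-2)]
      linarith
    have hcomp : ‖g - 1‖ ≤ ‖g + 1‖ := by
      have hml : ‖g-1‖*‖W‖ ≤ ‖g+1‖*‖W‖ := by
        rw [← norm_mul, ← norm_mul]
        rw [hn1]
        linarith [hkey2, norm_nonneg T]
      exact le_of_mul_le_mul_right hml hWlow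
    have hgre : 0 ≤ g.re := re_nonneg_of_norm_sub_le g hcomp
    have hure : g.re = 2*s*u.re - (2*s-1) := by
      rw [hgdef]
      simp [Complex.sub_re, Complex.re_ofReal_mul, Complex.ofReal_re]
    rw [div_le_iff₀ (by linarith : (0:ℝ) < 2*s)]
    nlinarith [hgre, hure]
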